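/- Let γ : [0,L] → ℝ² be continuously differentiable, parameterized by arc length, with continuous tangent indicatrix ϑ satisfying ϑ(q) − ϑ(p) ≤ q − p for all 0 ≤ p ≤ q ≤ L. Fix s ∈ [0,L) and let D be the open unit disk with center γ(s) + n(s), where n(s) = (−γ_y'(s), γ_x'(s)). Then there exists h > 0 such that γ([s, s+h] ∩ [0,L]) is disjoint from D. -/

import Mathlib

/-- Lemma `localdisjoint`.
Let `γ : [0,L] → ℝ² ≅ ℂ` be continuously differentiable, unit speed, with continuous
tangent indicatrix `ϑ` satisfying `ϑ(q) − ϑ(p) ≤ q − p` for `0 ≤ p ≤ q ≤ L` (class `K⁺`).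
Fix `s ∈ [0,L)` and let `D` be the open unit disk centered at `γ(s) + n(s)`, where
`n(s) = (−γ_y'(s), γ_x'(s)) = I·γ'(s)` is the left unit normal. Then there exists
`h > 0` such that `γ([s,s+h] ∩ [0,L])` is disjoint from `D`. -/
theorem stmt4 (L : ℝ) (hL : 0 ≤ L) (γ : ℝ → ℂ) (ϑ : ℝ → ℝ)
    (hϑc : ContinuousOn ϑ (Set.Icc 0 L))
    (hderiv : ∀ t ∈ Set.Icc (0 : ℝ) L,
      HasDerivAt γ ((Real.cos (ϑ t) : ℝ) + (Real.sin (ϑ t) : ℝ) * Complex.I) t)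
    (hK : ∀ p ∈ Set.Icc (0 : ℝ) L, ∀ q ∈ Set.Icc p L, ϑ q - ϑ p ≤ q - p)
    (s : ℝ) (hs : s ∈ Set.Ico (0 : ℝ) L) :
    ∃ h > (0 : ℝ), ∀ t ∈ Set.Icc s (s + h) ∩ Set.Icc (0 : ℝ) L,
      γ t ∉ Metric.ball (γ s + Complex.I * deriv γ s) 1 := by
  have hpi : (0:ℝ) < Real.pi / 4 := by positivity
  have hs0L : s ∈ Set.Icc (0:ℝ) L := ⟨hs.1, hs.2.le⟩
  obtain ⟨δ, hδpos, hδ⟩ := Metric.continuousWithinAt_iff.mp (hϑc s hs0L) (Real.pi/4) hpi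
  refine ⟨min (δ/2) (Real.pi/4), lt_min (by linarith) hpi, ?_⟩
  rintro t ⟨⟨hst, hth⟩, ht0, htL⟩
  -- basic bounds
  set τ : ℝ := t - s with hτdef
  have hτ0 : 0 ≤ τ := by simp [hτdef]; linarith
  have hτ4 : τ ≤ Real.pi / 4 := by
    have := min_le_right (δ/2) (Real.pi/4); simp only [hτdef]; linarith
  have hmemIcc : ∀ u ∈ Set.Icc s t, u ∈ Set.Icc (0:ℝ) L := by
    rintro u ⟨h1, h2⟩; exact ⟨le_trans hs.1 h1, le_trans h2 htL⟩
  have hϑclose : ∀ u ∈ Set.Icc s t, |ϑ u - ϑ s| < Real.pi/4 := by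
    rintro u hu
    have := hδ (hmemIcc u hu) ?_
    · rwa [Real.dist_eq] at this
    · rw [Real.dist_eq, abs_of_nonneg (by linarith [hu.1])]
      have : u - s ≤ min (δ/2) (Real.pi/4) := by linarith [hu.2, hth]
      have := min_le_left (δ/2) (Real.pi/4); linarith
  have hϑK : ∀ u ∈ Set.Icc s t, ϑ u - ϑ s ≤ u - s := fun u hu =>
    hK s hs0L u ⟨hu.1, (hmemIcc u hu).2⟩
  -- the witness direction
  set w : ℂ := Complex.I * Complex.exp ((-(ϑ s + τ) : ℝ) * Complex.I) with hwdef
  have habsw : ‖w‖ = 1 := by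
    rw [hwdef, norm_mul, Complex.norm_I, Complex.norm_exp_ofReal_mul_I, one_mul]
  -- complex exponential facts
  have hE : ∀ x : ℝ, ((Real.cos x : ℂ) + (Real.sin x : ℝ) * Complex.I)
      = Complex.exp ((x:ℝ) * Complex.I) := by
    intro x; rw [Complex.exp_mul_I]; norm_cast
  have hwE : ∀ x : ℝ, (w * Complex.exp ((x:ℝ) * Complex.I)).re
      = -Real.sin (x - ϑ s - τ) := by
    intro x
    have : w * Complex.exp ((x:ℝ) * Complex.I)
        = Complex.I * Complex.exp (((x - ϑ s - τ : ℝ)) * Complex.I) := by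
      rw [hwdef, mul_assoc, ← Complex.exp_add]
      congr 1
      push_cast
      ring
    rw [this, Complex.mul_re, Complex.I_re, Complex.I_im, Complex.exp_ofReal_mul_I_re,
      Complex.exp_ofReal_mul_I_im]
    ring
  -- FTC for the real part
  have hgderiv : ∀ u ∈ Set.uIcc s t,
      HasDerivAt (fun u => (w * γ u).re) (-Real.sin (ϑ u - ϑ s - τ)) u := by
    intro u hu
    rw [Set.uIcc_of_le hst] at hu
    have hd : HasDerivAt (fun u => w * γ u)
        (w * Complex.exp ((ϑ u : ℝ) * Complex.I)) u := by
      have := (hderiv u (hmemIcc u hu)).const_mul w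
      rwa [hE (ϑ u)] at this
    have := Complex.reCLM.hasFDerivAt.comp_hasDerivAt u hd
    simpa only [Function.comp_def, Complex.reCLM_apply, hwE (ϑ u)] using this
  have hϑcont : ContinuousOn ϑ (Set.Icc s t) := hϑc.mono (fun u hu => hmemIcc u hu)
  have hint1 : IntervalIntegrable (fun u => -Real.sin (ϑ u - ϑ s - τ))
      MeasureTheory.volume s t := by
    apply ContinuousOn.intervalIntegrable
    rw [Set.uIcc_of_le hst]
    exact ((Real.continuous_sin.comp_continuousOn
      ((hϑcont.sub continuousOn_const).sub continuousOn_const))).neg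
  have hFTC : ∫ u in s..t, -Real.sin (ϑ u - ϑ s - τ) = (w * γ t).re - (w * γ s).re :=
    intervalIntegral.integral_eq_sub_of_hasDerivAt hgderiv hint1
  -- the comparison integral
  have hcderiv : ∀ u ∈ Set.uIcc s t,
      HasDerivAt (fun u => Real.cos (u - s - τ)) (-Real.sin (u - s - τ)) u := by
    intro u _
    have := (Real.hasDerivAt_cos (u - s - τ)).comp u
      (((hasDerivAt_id u).sub_const s).sub_const τ)
    simpa [Function.comp_def] using this
  have hint2 : IntervalIntegrable (fun u => -Real.sin (u - s - τ))
      MeasureTheory.volume s t :=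
    (((Real.continuous_sin.comp
      ((continuous_id.sub continuous_const).sub continuous_const)).neg).intervalIntegrable s t)
  have hFTC2 : ∫ u in s..t, -Real.sin (u - s - τ) = 1 - Real.cos τ := by
    rw [intervalIntegral.integral_eq_sub_of_hasDerivAt hcderiv hint2]
    simp only [hτdef]
    rw [show t - s - (t - s) = 0 by ring, show s - s - (t - s) = -(t - s) by ring,
      Real.cos_zero, Real.cos_neg]
  -- pointwise comparison
  have hmono : ∀ u ∈ Set.Icc s t,
      -Real.sin (u - s - τ) ≤ -Real.sin (ϑ u - ϑ s - τ) := by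
    intro u hu
    have h1 : ϑ u - ϑ s ≤ u - s := hϑK u hu
    have h2 : |ϑ u - ϑ s| < Real.pi/4 := hϑclose u hu
    have habs := abs_lt.mp h2
    have hus : u - s ≤ τ := by simp [hτdef]; linarith [hu.2]
    have hx : ϑ u - ϑ s - τ ∈ Set.Icc (-(Real.pi/2)) (Real.pi/2) :=
      ⟨by linarith [habs.1], by linarith [hu.1, Real.pi_pos]⟩
    have hy : u - s - τ ∈ Set.Icc (-(Real.pi/2)) (Real.pi/2) :=
      ⟨by linarith [hu.1], by linarith [hus, Real.pi_pos]⟩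
    have := Real.strictMonoOn_sin.monotoneOn hx hy (by linarith)
    linarith
  have hcompare : (1:ℝ) - Real.cos τ ≤ (w * γ t).re - (w * γ s).re := by
    rw [← hFTC, ← hFTC2]
    exact intervalIntegral.integral_mono_on hst hint2 hint1 hmono
  -- now conclude
  have hds : deriv γ s = Complex.exp ((ϑ s : ℝ) * Complex.I) := by
    rw [(hderiv s hs0L).deriv, hE]
  have hcenter : (w * (γ t - (γ s + Complex.I * deriv γ s))).re
      = ((w * γ t).re - (w * γ s).re) + Real.cos τ := by
    rw [hds]
    have hexp : w * (Complex.I * Complex.exp ((ϑ s : ℝ) * Complex.I))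
        = - Complex.exp ((-τ : ℝ) * Complex.I) := by
      rw [hwdef]
      rw [show Complex.I * Complex.exp ((-(ϑ s + τ) : ℝ) * Complex.I) *
          (Complex.I * Complex.exp ((ϑ s:ℝ) * Complex.I))
          = (Complex.I * Complex.I) * (Complex.exp ((-(ϑ s + τ) : ℝ) * Complex.I) *
            Complex.exp ((ϑ s:ℝ) * Complex.I)) by ring, Complex.I_mul_I, ← Complex.exp_add]
      push_cast; ring_nf
    have : w * (γ t - (γ s + Complex.I * Complex.exp ((ϑ s : ℝ) * Complex.I)))
        = w * γ t - w * γ s - w * (Complex.I * Complex.exp ((ϑ s : ℝ) * Complex.I)) := by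
      ring
    rw [this, hexp]
    simp only [Complex.sub_re, Complex.neg_re, Complex.exp_ofReal_mul_I_re, Real.cos_neg]
    ring
  have hre1 : (1:ℝ) ≤ (w * (γ t - (γ s + Complex.I * deriv γ s))).re := by
    rw [hcenter]; linarith
  have habs1 : (1:ℝ) ≤ ‖(γ t - (γ s + Complex.I * deriv γ s))‖ := by
    calc (1:ℝ) ≤ (w * (γ t - (γ s + Complex.I * deriv γ s))).re := hre1
    _ ≤ ‖(w * (γ t - (γ s + Complex.I * deriv γ s)))‖ := Complex.re_le_norm _
    _ = ‖(γ t - (γ s + Complex.I * deriv γ s))‖ := by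
        rw [norm_mul, habsw, one_mul]
  intro hball
  rw [Metric.mem_ball, Complex.dist_eq] at hball
  linarith
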